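/- The function g(x) = 2 arccos(x)/(π(1 - x)) is monotonically (strictly) increasing on the interval [-0.68, 1). -/

import Mathlib

open Real

/-- If `f 0 = 0` and `f` has nonneg derivative on `[0,∞)`, then `f ≥ 0` there. -/
lemma aux_nonneg {f f' : ℝ → ℝ} (hd : ∀ t, HasDerivAt f (f' t) t)
    (h0 : f 0 = 0) (hder : ∀ t, 0 ≤ t → 0 ≤ f' t) {t : ℝ} (ht : 0 ≤ t) : 0 ≤ f t := by
  have hmono : MonotoneOn f (Set.Ici (0:ℝ)) := by
    apply monotoneOn_of_deriv_nonneg (convex_Ici 0)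
    · exact fun x _ => (hd x).continuousAt.continuousWithinAt
    · exact fun x hx => ((hd x).differentiableAt).differentiableWithinAt
    · intro x hx
      rw [(hd x).deriv]
      exact hder x (le_of_lt (by simpa using hx))
  have := hmono (Set.self_mem_Ici) ht ht
  rwa [h0] at this

lemma sin_ge_poly {t : ℝ} (ht : 0 ≤ t) : t - t^3/6 ≤ sin t := by
  have h := aux_nonneg (f := fun t => sin t - (t - t^3/6))
    (f' := fun t => cos t - (1 - t^2/2)) (fun t => by
      have h1 := Real.hasDerivAt_sin t
      have h2 : HasDerivAt (fun t : ℝ => t - t^3/6) (1 - 3*t^2/6) t := by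
        refine ((hasDerivAt_id t).sub (((hasDerivAt_pow 3 t)).div_const 6)).congr_deriv ?_; norm_num
      refine (h1.sub h2).congr_deriv ?_; ring)
    (by norm_num) (fun t ht => by nlinarith [Real.one_sub_sq_div_two_le_cos (x := t)]) ht
  linarith [h]

lemma cos_le_poly {t : ℝ} (ht : 0 ≤ t) : cos t ≤ 1 - t^2/2 + t^4/24 := by
  have h := aux_nonneg (f := fun t => 1 - t^2/2 + t^4/24 - cos t)
    (f' := fun t => sin t - (t - t^3/6)) (fun t => by
      have h1 := Real.hasDerivAt_cos t
      have h2 : HasDerivAt (fun t : ℝ => 1 - t^2/2 + t^4/24) (-(2*t)/2 + 4*t^3/24) t := by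
        refine ((((hasDerivAt_pow 2 t).div_const 2).const_sub 1).add ((hasDerivAt_pow 4 t).div_const 24)).congr_deriv ?_
        push_cast; ring
      refine (h2.sub h1).congr_deriv ?_; push_cast; ring)
    (by norm_num) (fun t ht => by nlinarith [sin_ge_poly ht]) ht
  linarith [h]

lemma sin_le_poly {t : ℝ} (ht : 0 ≤ t) : sin t ≤ t - t^3/6 + t^5/120 := by
  have h := aux_nonneg (f := fun t => t - t^3/6 + t^5/120 - sin t)
    (f' := fun t => 1 - t^2/2 + t^4/24 - cos t) (fun t => by
      have h1 := Real.hasDerivAt_sin t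
      have h2 : HasDerivAt (fun t : ℝ => t - t^3/6 + t^5/120) (1 - 3*t^2/6 + 5*t^4/120) t := by
        refine (((hasDerivAt_id t).sub ((hasDerivAt_pow 3 t).div_const 6)).add
          ((hasDerivAt_pow 5 t).div_const 120)).congr_deriv ?_; norm_num
      refine (h2.sub h1).congr_deriv ?_; push_cast; ring)
    (by norm_num) (fun t ht => by nlinarith [cos_le_poly ht]) ht
  linarith [h]

lemma cos_ge_poly {t : ℝ} (ht : 0 ≤ t) : 1 - t^2/2 + t^4/24 - t^6/720 ≤ cos t := by
  have h := aux_nonneg (f := fun t => cos t - (1 - t^2/2 + t^4/24 - t^6/720))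
    (f' := fun t => (t - t^3/6 + t^5/120) - sin t) (fun t => by
      have h1 := Real.hasDerivAt_cos t
      have h2 : HasDerivAt (fun t : ℝ => 1 - t^2/2 + t^4/24 - t^6/720)
          (-(2*t)/2 + 4*t^3/24 - 6*t^5/720) t := by
        refine (((((hasDerivAt_pow 2 t).div_const 2).const_sub 1).add
          ((hasDerivAt_pow 4 t).div_const 24)).sub ((hasDerivAt_pow 6 t).div_const 720)).congr_deriv ?_
        push_cast; ring
      refine (h1.sub h2).congr_deriv ?_; push_cast; ring)
    (by norm_num) (fun t ht => by nlinarith [sin_le_poly ht]) ht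
  linarith [h]


lemma arccos_gt {x c : ℝ} (hx1 : -1 ≤ x) (hx2 : x ≤ 1) (hc0 : 0 ≤ c) (hcpi : c ≤ π)
    (h : x < cos c) : c < arccos x := by
  have hm1 : c ∈ Set.Icc 0 π := ⟨hc0, hcpi⟩
  have hm2 : arccos x ∈ Set.Icc 0 π := ⟨arccos_nonneg x, arccos_le_pi x⟩
  have : cos (arccos x) < cos c := by rwa [Real.cos_arccos hx1 hx2]
  exact (Real.strictAntiOn_cos.lt_iff_gt hm2 hm1).1 this

lemma key {x : ℝ} (h1 : -(0.68 : ℝ) < x) (h2 : x < 1) :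
    Real.sqrt (1 - x^2) < (1 + x) * arccos x := by
  have hx1 : (0:ℝ) < 1 + x := by norm_num at h1 ⊢; linarith
  have hxm1 : (-1:ℝ) ≤ x := by linarith
  rcases le_or_gt (-(1:ℝ)/2) x with hge | hlt
  · -- easy branch: x ≥ -1/2
    set c := Real.sqrt (2 * (1 - x)) with hc
    have hpos : (0:ℝ) < 2 * (1 - x) := by linarith
    have hcsq : c^2 = 2 * (1 - x) := Real.sq_sqrt hpos.le
    have hcpos : 0 < c := Real.sqrt_pos.2 hpos
    have hc3 : c < 3 := by nlinarith
    have hcpi : c ≤ π := by linarith [Real.pi_gt_three]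
    have hcos : x < cos c := by
      have := Real.one_sub_sq_div_two_lt_cos (x := c) (by positivity)
      rw [hcsq] at this; linarith
    have harc : c < arccos x := arccos_gt hxm1 h2.le hcpos.le hcpi hcos
    have hle : Real.sqrt (1 - x^2) ≤ (1 + x) * c := by
      rw [show (1+x)*c = Real.sqrt (((1+x)*c)^2) from (Real.sqrt_sq (by positivity)).symm]
      apply Real.sqrt_le_sqrt
      rw [mul_pow, hcsq]
      nlinarith [mul_nonneg (mul_nonneg (by linarith : (0:ℝ) ≤ 1 - x) hx1.le)
        (by linarith : (0:ℝ) ≤ 2*x + 1)]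
    calc Real.sqrt (1 - x^2) ≤ (1+x) * c := hle
      _ < (1+x) * arccos x := by exact mul_lt_mul_of_pos_left harc hx1
  · -- hard branch: -0.68 < x < -1/2
    set u := (1 - x) / (1 + x) with hudef
    have hu3 : 3 < u := by rw [lt_div_iff₀ hx1]; linarith
    have hu525 : u < 5.25 := by rw [div_lt_iff₀ hx1]; norm_num at h1 ⊢; linarith
    set c := Real.sqrt u with hc
    have hu0 : (0:ℝ) < u := by linarith
    have hcsq : c^2 = u := Real.sq_sqrt hu0.le
    have hcpos : 0 < c := Real.sqrt_pos.2 hu0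
    have hc3 : c < 3 := by nlinarith
    have hcpi : c ≤ π := by linarith [Real.pi_gt_three]
    have hxeq : x * (u + 1) = 1 - u := by
      rw [hudef]; field_simp; ring
    have hpoly : x < 1 - u/2 + u^2/24 - u^3/720 := by
      have hu1 : (0:ℝ) < u + 1 := by linarith
      rw [show x = (1 - u)/(u + 1) by rw [eq_div_iff (ne_of_gt hu1)]; exact hxeq]
      rw [div_lt_iff₀ hu1]
      nlinarith [mul_nonneg (mul_nonneg hu0.le (by linarith : (0:ℝ) ≤ 5.25 - u))
          (sq_nonneg (u - 11.875)), mul_pos hu0 (show (0:ℝ) < 5.25 - u by linarith)]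
    have hcos : x < cos c := by
      have hb := cos_ge_poly hcpos.le
      have e : 1 - c^2/2 + c^4/24 - c^6/720 = 1 - u/2 + u^2/24 - u^3/720 := by
        rw [show c^4 = (c^2)^2 by ring, show c^6 = (c^2)^3 by ring, hcsq]
      linarith [e ▸ hb]
    have harc : c < arccos x := arccos_gt hxm1 h2.le hcpos.le hcpi hcos
    have heq : Real.sqrt (1 - x^2) = (1 + x) * c := by
      rw [show (1+x)*c = Real.sqrt (((1+x)*c)^2) from (Real.sqrt_sq (by positivity)).symm]
      congr 1
      rw [mul_pow, hcsq, hudef]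
      field_simp; ring
    rw [heq]
    exact mul_lt_mul_of_pos_left harc hx1
/-- The function `g(x) = 2 arccos x / (π (1 - x))` is strictly increasing on `[-0.68, 1)`. -/
theorem stmt_1 :
    StrictMonoOn (fun x : ℝ => 2 * arccos x / (π * (1 - x)))
      (Set.Ico (-0.68 : ℝ) 1) := by
  apply strictMonoOn_of_deriv_pos (convex_Ico _ _)
  · apply ContinuousOn.div
    · exact (continuous_const.mul Real.continuous_arccos).continuousOn
    · exact (continuous_const.mul (continuous_const.sub continuous_id)).continuousOn
    · intro x hx
      exact ne_of_gt (mul_pos Real.pi_pos (by linarith [hx.2]))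
  · intro x hx
    rw [interior_Ico] at hx
    obtain ⟨hxl, hxr⟩ := hx
    have hx1 : (0:ℝ) < 1 + x := by norm_num at hxl ⊢; linarith
    have hxm1 : -1 < x := by linarith
    have hs0 : (0:ℝ) < 1 - x^2 := by nlinarith
    set s := Real.sqrt (1 - x^2) with hsdef
    have hssq : s^2 = 1 - x^2 := Real.sq_sqrt hs0.le
    have hspos : 0 < s := Real.sqrt_pos.2 hs0
    have hden : π * (1 - x) ≠ 0 :=
      ne_of_gt (mul_pos Real.pi_pos (by linarith))
    have hd1 : HasDerivAt (fun x : ℝ => 2 * arccos x) (2 * -(1 / Real.sqrt (1 - x^2))) x :=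
      (Real.hasDerivAt_arccos (by linarith) (ne_of_lt hxr)).const_mul 2
    have hd2 : HasDerivAt (fun x : ℝ => π * (1 - x)) (π * (-1)) x := by
      simpa using ((hasDerivAt_id x).const_sub 1).const_mul π
    have hD := hd1.div hd2 hden
    rw [show (fun x : ℝ => 2 * arccos x / (π * (1 - x))) = (fun x : ℝ => 2 * arccos x) / (fun x : ℝ => π * (1 - x)) from rfl, hD.deriv]
    apply div_pos
    · have hkey := key hxl hxr
      have h1 : 1 - x < arccos x * s := by
        nlinarith [mul_lt_mul_of_pos_right hkey hspos]
      have hN : 2 * -(1 / Real.sqrt (1 - x^2)) * (π * (1 - x)) - 2 * arccos x * (π * -1)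
          = 2 * π * (arccos x - (1 - x) / s) := by
        rw [← hsdef]; field_simp; ring
      rw [hN]
      have : (1 - x) / s < arccos x := by
        rw [div_lt_iff₀ hspos]; linarith
      have := Real.pi_pos
      nlinarith
    · have := Real.pi_pos
      positivity
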